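/- Let p ≡ 1 (mod 8) be a prime. Over F_p, the polynomials G^{((5p-5)/8)}(3/4, 5/8, 7/8 | λ) and (1-λ)^{(p-1)/2} · G^{((p-1)/8)}(1/4, 1/8, 7/8 | λ) are equal. -/

import Mathlib

/-- The Pochhammer symbol `(x;ℓ) = x(x+1)⋯(x+ℓ-1)` in a field `K`. -/
noncomputable def poch {K : Type*} [Field K] (x : K) (ℓ : ℕ) : K :=
  ∏ i ∈ Finset.range ℓ, (x + (i : K))

/-- The truncated Gaussian hypergeometric series `G^(d)(a,b,c | z)` as a
polynomial in `z`: `Σ_{ℓ=0}^d ((a;ℓ)(b;ℓ))/((c;ℓ)(1;ℓ)) z^ℓ`. -/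
noncomputable def Gpoly {K : Type*} [Field K] (d : ℕ) (a b c : K) : Polynomial K :=
  ∑ ℓ ∈ Finset.range (d + 1),
    Polynomial.C (poch a ℓ * poch b ℓ / (poch c ℓ * poch 1 ℓ)) * Polynomial.X ^ ℓ

open Finset

lemma poch_eq_asc {K : Type*} [Field K] (x : K) (ℓ : ℕ) :
    poch x ℓ = (ascPochhammer K ℓ).eval x := by
  induction ℓ with
  | zero => simp [poch]
  | succ n ih =>
    rw [poch, Finset.prod_range_succ, ← poch, ih, ascPochhammer_succ_right]
    simp

lemma poch_neg {K : Type*} [Field K] (A ℓ : ℕ) :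
    poch (-(A : K)) ℓ = (-1)^ℓ * ((ℓ.factorial * A.choose ℓ : ℕ) : K) := by
  rw [poch_eq_asc, ascPochhammer_eval_neg_eq_descPochhammer,
    descPochhammer_eval_eq_descFactorial, Nat.descFactorial_eq_factorial_mul_choose]

lemma poch_one {K : Type*} [Field K] (ℓ : ℕ) :
    poch (1 : K) ℓ = (ℓ.factorial : K) := by
  rw [poch_eq_asc]
  exact_mod_cast ascPochhammer_eval_one K ℓ

lemma coeff_sum_C {K : Type*} [Field K] (d : ℕ) (f : ℕ → K) (n : ℕ) :
    (∑ k ∈ range (d+1), Polynomial.C (f k) * Polynomial.X ^ k).coeff n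
      = if n ≤ d then f n else 0 := by
  rw [Polynomial.finset_sum_coeff]
  simp only [Polynomial.coeff_C_mul, Polynomial.coeff_X_pow, mul_ite, mul_one, mul_zero]
  rw [Finset.sum_ite_eq (range (d+1)) n f]
  simp [Nat.lt_succ_iff]

lemma Gpoly_coeff {K : Type*} [Field K] (d : ℕ) (a b c : K) (n : ℕ) :
    (Gpoly d a b c).coeff n
      = if n ≤ d then poch a n * poch b n / (poch c n * poch 1 n) else 0 := by
  rw [Gpoly, coeff_sum_C]

lemma one_sub_X_pow {K : Type*} [Field K] (M : ℕ) :
    ((1 - Polynomial.X : Polynomial K) ^ M)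
      = ∑ k ∈ range (M+1), Polynomial.C ((-1)^k * (M.choose k : K)) * Polynomial.X ^ k := by
  rw [sub_eq_add_neg, add_comm, add_pow]
  refine Finset.sum_congr rfl fun k hk => ?_
  rw [one_pow, mul_one, neg_pow]
  simp only [map_mul, map_pow, map_neg, map_one, Polynomial.C_eq_natCast]
  ring

lemma vand (x y m : ℕ) : ∑ j ∈ range (m+1), x.choose j * y.choose (m - j) = (x+y).choose m := by
  rw [Nat.add_choose_eq x y m, Finset.Nat.sum_antidiagonal_eq_sum_range_succ_mk]

lemma helper1 (b s ℓ : ℕ) (h : ℓ ≤ s) :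
    b.choose s * s.choose ℓ = b.choose ℓ * (b - ℓ).choose (s - ℓ) := by
  rcases le_or_gt s b with hs | hs
  · exact Nat.choose_mul h
  · rcases le_or_gt ℓ b with hb | hb
    · rw [Nat.choose_eq_zero_of_lt hs, Nat.zero_mul,
        Nat.choose_eq_zero_of_lt (show b - ℓ < s - ℓ by omega), Nat.mul_zero]
    · rw [Nat.choose_eq_zero_of_lt hs, Nat.zero_mul, Nat.choose_eq_zero_of_lt hb, Nat.zero_mul]

lemma helper2 (m j n : ℕ) : m.choose j * (m - j).choose n = m.choose n * (m - n).choose j := by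
  rcases le_or_gt (j + n) m with h | h
  · have h1 := Nat.choose_mul (n := m) (show j ≤ j + n by omega)
    have h2 := Nat.choose_mul (n := m) (show n ≤ j + n by omega)
    rw [show j + n - j = n by omega] at h1
    rw [show j + n - n = j by omega] at h2
    rw [← h1, ← h2, Nat.choose_symm_add]
  · have z1 : m.choose j * (m - j).choose n = 0 := by
      rcases le_or_gt j m with hj | hj
      · rw [Nat.choose_eq_zero_of_lt (show m - j < n by omega), Nat.mul_zero]
      · rw [Nat.choose_eq_zero_of_lt hj, Nat.zero_mul]
    have z2 : m.choose n * (m - n).choose j = 0 := by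
      rcases le_or_gt n m with hn | hn
      · rw [Nat.choose_eq_zero_of_lt (show m - n < j by omega), Nat.mul_zero]
      · rw [Nat.choose_eq_zero_of_lt hn, Nat.zero_mul]
    rw [z1, z2]

lemma lemA (a b c : ℕ) (hba : b ≤ a) (hac : a ≤ c) (ℓ : ℕ) :
    b.choose ℓ * (c - ℓ).choose (a - ℓ) =
      ∑ j ∈ range (a+1), (c - b).choose j * (b.choose (a - j) * (a - j).choose ℓ) := by
  rcases le_or_gt ℓ b with hℓ | hℓ
  · rw [← Finset.sum_subset (Finset.range_subset_range.2 (show a - ℓ + 1 ≤ a + 1 by omega))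
      (by
        intro j hj hj'
        simp only [Finset.mem_range] at hj hj'
        rw [Nat.choose_eq_zero_of_lt (show a - j < ℓ by omega), Nat.mul_zero, Nat.mul_zero])]
    have hcongr : (∑ j ∈ range (a - ℓ + 1), (c - b).choose j * (b.choose (a - j) * (a - j).choose ℓ))
        = ∑ j ∈ range (a - ℓ + 1), b.choose ℓ * ((c - b).choose j * (b - ℓ).choose ((a - ℓ) - j)) := by
      refine Finset.sum_congr rfl fun j hj => ?_
      simp only [Finset.mem_range] at hj
      rw [helper1 b (a-j) ℓ (by omega), show (a - j) - ℓ = (a - ℓ) - j by omega]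
      ring
    rw [hcongr, ← Finset.mul_sum, vand (c-b) (b-ℓ) (a-ℓ), show c - b + (b - ℓ) = c - ℓ by omega]
  · rw [Nat.choose_eq_zero_of_lt hℓ, Nat.zero_mul]
    symm; apply Finset.sum_eq_zero; intro j hj
    rcases le_or_gt ℓ (a - j) with h | h
    · rw [Nat.choose_eq_zero_of_lt (show b < a - j by omega), Nat.zero_mul, Nat.mul_zero]
    · rw [Nat.choose_eq_zero_of_lt h, Nat.mul_zero, Nat.mul_zero]

lemma star (a b c n : ℕ) (hba : b ≤ a) (hab : a + b ≤ c) (hnb : n + b ≤ c) :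
    ∑ ℓ ∈ range (n+1), (c - a - b).choose (n - ℓ) * (b.choose ℓ * (c - ℓ).choose (a - ℓ)) =
      (c - b).choose n * (c - n).choose a := by
  have hac : a ≤ c := by omega
  calc
    ∑ ℓ ∈ range (n+1), (c - a - b).choose (n - ℓ) * (b.choose ℓ * (c - ℓ).choose (a - ℓ))
      = ∑ ℓ ∈ range (n+1), ∑ j ∈ range (a+1),
          (c - a - b).choose (n - ℓ) * ((c - b).choose j * (b.choose (a - j) * (a - j).choose ℓ)) := by
        refine Finset.sum_congr rfl fun ℓ _ => ?_
        rw [lemA a b c hba hac ℓ, Finset.mul_sum]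
    _ = ∑ j ∈ range (a+1), ∑ ℓ ∈ range (n+1),
          (c - a - b).choose (n - ℓ) * ((c - b).choose j * (b.choose (a - j) * (a - j).choose ℓ)) :=
        Finset.sum_comm
    _ = ∑ j ∈ range (a+1), (c - b).choose j * (((c - b) - j).choose n * b.choose (a - j)) := by
        refine Finset.sum_congr rfl fun j hj => ?_
        simp only [Finset.mem_range] at hj
        rw [show ∀ S:ℕ, (∑ ℓ ∈ range (n+1),
          (c - a - b).choose (n - ℓ) * ((c - b).choose j * (b.choose (a - j) * (a - j).choose ℓ))) = S ↔
          (c - b).choose j * b.choose (a - j) * (∑ ℓ ∈ range (n+1), (a - j).choose ℓ * (c - a - b).choose (n - ℓ)) = S from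
          fun S => by rw [Finset.mul_sum]; exact Iff.of_eq (congrArg (· = S) (Finset.sum_congr rfl fun ℓ _ => by ring))]
        rw [vand (a - j) (c - a - b) n, show a - j + (c - a - b) = (c - b) - j by omega]
        ring
    _ = ∑ j ∈ range (a+1), (c - b).choose n * (((c - b) - n).choose j * b.choose (a - j)) := by
        refine Finset.sum_congr rfl fun j hj => ?_
        have := helper2 (c - b) j n
        calc (c - b).choose j * (((c - b) - j).choose n * b.choose (a - j))
            = ((c - b).choose j * ((c - b) - j).choose n) * b.choose (a - j) := by ring
          _ = ((c - b).choose n * ((c - b) - n).choose j) * b.choose (a - j) := by rw [this]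
          _ = (c - b).choose n * (((c - b) - n).choose j * b.choose (a - j)) := by ring
    _ = (c - b).choose n * (c - n).choose a := by
        rw [← Finset.mul_sum, vand ((c - b) - n) b a, show (c - b) - n + b = c - n by omega]

theorem Gpoly_euler_transform_one_mod_eight
    (p : ℕ) [Fact p.Prime] (hp8 : p % 8 = 1) :
    Gpoly ((5 * p - 5) / 8) ((3 : ZMod p) / 4) ((5 : ZMod p) / 8) ((7 : ZMod p) / 8) =
      (1 - Polynomial.X) ^ ((p - 1) / 2) *
        Gpoly ((p - 1) / 8) ((1 : ZMod p) / 4) ((1 : ZMod p) / 8)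
          ((7 : ZMod p) / 8) := by
  have hp2 := (Fact.out : p.Prime).two_le
  set t := p / 8 with htdef
  have ht : p = 8 * t + 1 := by omega
  have htpos : 1 ≤ t := by
    rcases Nat.lt_or_ge t 1 with h | h
    · exfalso
      have : p = 1 := by omega
      exact Nat.Prime.one_lt (Fact.out : p.Prime) |>.ne' this
    · exact h
  have hK2 : (2 : ZMod p) ≠ 0 := by
    have h2 : ((2:ℕ) : ZMod p) ≠ 0 := by
      rw [Ne, CharP.cast_eq_zero_iff (ZMod p) p]
      intro h
      have := Nat.le_of_dvd (by norm_num) h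
      omega
    simpa using h2
  have hK4 : (4 : ZMod p) ≠ 0 := by
    have h : (4 : ZMod p) = 2 * 2 := by norm_num
    rw [h]; exact mul_ne_zero hK2 hK2
  have hK8 : (8 : ZMod p) ≠ 0 := by
    have h : (8 : ZMod p) = 2 * (2 * 2) := by norm_num
    rw [h]; exact mul_ne_zero hK2 (mul_ne_zero hK2 hK2)
  have hfact : ∀ n : ℕ, n < p → ((n.factorial : ℕ) : ZMod p) ≠ 0 := by
    intro n hn
    rw [Ne, CharP.cast_eq_zero_iff (ZMod p) p]
    intro h
    have := (Nat.Prime.dvd_factorial (Fact.out : p.Prime)).1 h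
    omega
  have hchoose : ∀ m k : ℕ, m < p → k ≤ m → ((m.choose k : ℕ) : ZMod p) ≠ 0 := by
    intro m k hm hk
    rw [Ne, CharP.cast_eq_zero_iff (ZMod p) p]
    intro h
    have h1 : m.choose k * (k.factorial * (m-k).factorial) = m.factorial := by
      rw [← Nat.choose_mul_factorial_mul_factorial hk]; ring
    have h2 : p ∣ m.factorial := h1 ▸ Dvd.dvd.mul_right h _
    have := (Nat.Prime.dvd_factorial (Fact.out : p.Prime)).1 h2
    omega
  have hp0 : ((p:ℕ) : ZMod p) = 0 := ZMod.natCast_self p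
  have key : ∀ num den A m : ℕ, ((den:ℕ) : ZMod p) ≠ 0 → A * den + num = m * p →
      ((num:ℕ) : ZMod p) / ((den:ℕ) : ZMod p) = -((A:ℕ) : ZMod p) := by
    intro num den A m hden heq
    rw [div_eq_iff hden]
    have h0 : ((A:ℕ) : ZMod p) * ((den:ℕ):ZMod p) + ((num:ℕ):ZMod p) = 0 := by
      calc ((A:ℕ) : ZMod p) * ((den:ℕ):ZMod p) + ((num:ℕ):ZMod p)
          = ((A * den + num : ℕ) : ZMod p) := by push_cast; ring
        _ = ((m * p : ℕ) : ZMod p) := by rw [heq]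
        _ = 0 := by push_cast [hp0]; ring
    linear_combination h0
  have e34 : (3 : ZMod p) / 4 = -(((6*t : ℕ)) : ZMod p) := by
    have h := key 3 4 (6*t) 3 (by exact_mod_cast hK4) (by omega)
    rw [show ((3:ℕ):ZMod p) = (3:ZMod p) by norm_cast,
      show ((4:ℕ):ZMod p) = (4:ZMod p) by norm_cast] at h
    exact h
  have e58 : (5 : ZMod p) / 8 = -(((5*t : ℕ)) : ZMod p) := by
    have h := key 5 8 (5*t) 5 (by exact_mod_cast hK8) (by omega)
    rw [show ((5:ℕ):ZMod p) = (5:ZMod p) by norm_cast,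
      show ((8:ℕ):ZMod p) = (8:ZMod p) by norm_cast] at h
    exact h
  have e78 : (7 : ZMod p) / 8 = -(((7*t : ℕ)) : ZMod p) := by
    have h := key 7 8 (7*t) 7 (by exact_mod_cast hK8) (by omega)
    rw [show ((7:ℕ):ZMod p) = (7:ZMod p) by norm_cast,
      show ((8:ℕ):ZMod p) = (8:ZMod p) by norm_cast] at h
    exact h
  have e14 : (1 : ZMod p) / 4 = -(((2*t : ℕ)) : ZMod p) := by
    have h := key 1 4 (2*t) 1 (by exact_mod_cast hK4) (by omega)
    rw [show ((1:ℕ):ZMod p) = (1:ZMod p) by norm_cast,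
      show ((4:ℕ):ZMod p) = (4:ZMod p) by norm_cast] at h
    exact h
  have e18 : (1 : ZMod p) / 8 = -(((t : ℕ)) : ZMod p) := by
    have h := key 1 8 t 1 (by exact_mod_cast hK8) (by omega)
    rw [show ((1:ℕ):ZMod p) = (1:ZMod p) by norm_cast,
      show ((8:ℕ):ZMod p) = (8:ZMod p) by norm_cast] at h
    exact h
  have d1 : (5*p-5)/8 = 5*t := by omega
  have d2 : (p-1)/2 = 4*t := by omega
  have d3 : (p-1)/8 = t := by omega
  rw [d1, d2, d3, e34, e58, e78, e14, e18]
  apply Polynomial.ext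
  intro n
  rw [one_sub_X_pow, Polynomial.coeff_mul, Finset.Nat.sum_antidiagonal_eq_sum_range_succ_mk]
  simp only [Gpoly_coeff, coeff_sum_C]
  by_cases hn : n ≤ 5*t
  · rw [if_pos hn]
    have hu : (((7*t).choose (2*t) : ℕ) : ZMod p) ≠ 0 := hchoose _ _ (by omega) (by omega)
    refine mul_right_cancel₀ hu ?_
    rw [Finset.sum_mul]
    have hnat : ∑ k ∈ range (n+1),
        (4*t).choose k * (t.choose (n-k) * ((7*t)-(n-k)).choose ((2*t)-(n-k)))
        = (6*t).choose n * ((7*t)-n).choose (2*t) := by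
      rw [← Finset.sum_range_reflect]
      have hc : ∀ ℓ ∈ range (n+1),
          (4*t).choose (n+1-1-ℓ) * (t.choose (n-(n+1-1-ℓ)) *
            ((7*t)-(n-(n+1-1-ℓ))).choose ((2*t)-(n-(n+1-1-ℓ))))
          = (7*t - 2*t - t).choose (n-ℓ) * (t.choose ℓ * ((7*t)-ℓ).choose ((2*t)-ℓ)) := by
        intro ℓ hℓ; simp only [Finset.mem_range] at hℓ
        rw [show n+1-1-ℓ = n - ℓ by omega, show n - (n-ℓ) = ℓ by omega,
          show 7*t-2*t-t = 4*t by omega]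
      rw [Finset.sum_congr rfl hc, star (2*t) t (7*t) n (by omega) (by omega) (by omega),
        show 7*t - t = 6*t by omega]
    have hterm : ∀ k ∈ range (n+1),
        ((if k ≤ 4*t then (-1)^k * (((4*t).choose k : ℕ) : ZMod p) else 0) *
          (if n - k ≤ t then poch (-(((2*t) : ℕ) : ZMod p)) (n-k) * poch (-((t : ℕ) : ZMod p)) (n-k) /
            (poch (-(((7*t) : ℕ) : ZMod p)) (n-k) * poch 1 (n-k)) else 0)) *
          (((7*t).choose (2*t) : ℕ) : ZMod p)
        = (-1)^n * (((4*t).choose k * (t.choose (n-k) * ((7*t)-(n-k)).choose ((2*t)-(n-k))) : ℕ) : ZMod p) := by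
      intro k hk; simp only [Finset.mem_range] at hk
      by_cases hk4 : k ≤ 4*t
      · by_cases hl : n - k ≤ t
        · rw [if_pos hk4, if_pos hl, poch_neg, poch_neg, poch_neg, poch_one]
          have hfl := hfact (n-k) (by omega)
          have h7l := hchoose (7*t) (n-k) (by omega) (by omega)
          have hne : ((-1 : ZMod p))^(n-k) ≠ 0 := pow_ne_zero _ (by norm_num)
          have hnid : (7*t).choose (2*t) * (2*t).choose (n-k)
              = (7*t).choose (n-k) * ((7*t)-(n-k)).choose ((2*t)-(n-k)) :=
            Nat.choose_mul (by omega)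
          have hcast : (((7*t).choose (2*t) : ℕ) : ZMod p) * (((2*t).choose (n-k) : ℕ) : ZMod p)
              = (((7*t).choose (n-k) : ℕ) : ZMod p) * (((((7*t)-(n-k)).choose ((2*t)-(n-k)) : ℕ)) : ZMod p) := by
            exact_mod_cast congrArg (Nat.cast : ℕ → ZMod p) hnid
          rw [show ((-1 : ZMod p))^n = (-1)^k * (-1)^(n-k) by
            rw [← pow_add]; congr 1; omega]
          field_simp
          push_cast
          linear_combination ((((4*t).choose k : ℕ) : ZMod p) * (((n - k).factorial : ℕ) : ZMod p)^2 *
            ((t.choose (n - k) : ℕ) : ZMod p)) * hcast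
        · rw [if_pos hk4, if_neg hl, mul_zero, zero_mul]
          symm
          rw [Nat.choose_eq_zero_of_lt (show t < n - k by omega)]
          simp
      · rw [if_neg hk4, zero_mul, zero_mul]
        symm
        rw [Nat.choose_eq_zero_of_lt (show 4*t < k by omega)]
        simp
    rw [Finset.sum_congr rfl hterm, ← Finset.mul_sum, ← Nat.cast_sum, hnat]
    rw [poch_neg, poch_neg, poch_neg, poch_one]
    have hfn := hfact n (by omega)
    have h7n := hchoose (7*t) n (by omega) (by omega)
    have hne : ((-1 : ZMod p))^n ≠ 0 := pow_ne_zero _ (by norm_num)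
    have hnid : (7*t).choose n * ((7*t)-n).choose (2*t) = (7*t).choose (2*t) * (5*t).choose n := by
      have h := helper2 (7*t) n (2*t)
      rw [show 7*t - 2*t = 5*t by omega] at h
      exact h
    have hcast : (((7*t).choose n : ℕ) : ZMod p) * ((((7*t)-n).choose (2*t) : ℕ) : ZMod p)
        = (((7*t).choose (2*t) : ℕ) : ZMod p) * (((5*t).choose n : ℕ) : ZMod p) := by
      exact_mod_cast congrArg (Nat.cast : ℕ → ZMod p) hnid
    field_simp
    push_cast
    linear_combination (((n.factorial : ℕ) : ZMod p)^2 * (((6*t).choose n : ℕ) : ZMod p)) * hcast.symm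
  · rw [if_neg hn]
    symm
    refine Finset.sum_eq_zero fun k hk => ?_
    simp only [Finset.mem_range] at hk
    by_cases hk4 : k ≤ 4*t
    · rw [if_neg (show ¬(n - k ≤ t) by omega), mul_zero]
    · rw [if_neg hk4, zero_mul]
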